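/- Let k be a field of characteristic 2 and A = k[x,y]/(x², y²+x). The automorphism group of A as an R-algebra-with-H-comodule-structure (R = k[x]/(x²), H = α₂'s Hopf algebra, coaction ρ(x)=1⊗x, ρ(y)=x⊗1+1⊗y) that also fixes the augmentation ε (x,y ↦ 0) contains a nonidentity element; hence the category of pointed finite torsors over Spec(k[x]/x²) contains an object with a nontrivial automorphism and is therefore not cofiltered in the strong sense of having unique morphisms to a terminal pro-object. -/

import Mathlib

open TensorProduct

set_option maxHeartbeats 1000000
set_option synthInstance.maxHeartbeats 400000

noncomputable abbrev Hk (k : Type) [Field k] : Type :=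
  Polynomial k ⧸ Ideal.span {(Polynomial.X : Polynomial k) ^ 2}

noncomputable def xH (k : Type) [Field k] : Hk k :=
  Ideal.Quotient.mk _ Polynomial.X

noncomputable abbrev Ak (k : Type) [Field k] : Type :=
  MvPolynomial (Fin 2) k ⧸
    Ideal.span {(MvPolynomial.X 0 : MvPolynomial (Fin 2) k) ^ 2,
      MvPolynomial.X 1 ^ 2 + MvPolynomial.X 0}

noncomputable def xA (k : Type) [Field k] : Ak k :=
  Ideal.Quotient.mk _ (MvPolynomial.X 0)

noncomputable def yA (k : Type) [Field k] : Ak k :=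
  Ideal.Quotient.mk _ (MvPolynomial.X 1)

section aux

variable (k : Type) [Field k] [CharP k 2]

set_option linter.unusedSectionVars false

lemma charAk : (2 : Ak k) = 0 := by
  have h2 : (2 : k) = 0 := by
    have := CharP.cast_eq_zero k 2; exact_mod_cast this
  calc (2 : Ak k) = algebraMap k (Ak k) 2 := (map_ofNat _ 2).symm
    _ = 0 := by rw [h2, map_zero]

lemma xA_sq : (xA k) ^ 2 = 0 := by
  rw [xA, ← map_pow, Ideal.Quotient.eq_zero_iff_mem]
  exact Ideal.subset_span (by simp)

lemma yA_sq : (yA k) ^ 2 + xA k = 0 := by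
  rw [yA, xA, ← map_pow, ← map_add, Ideal.Quotient.eq_zero_iff_mem]
  exact Ideal.subset_span (by simp)

lemma key : (xA k + yA k) ^ 2 + xA k = 0 := by
  have h : (xA k + yA k) ^ 2 + xA k
      = (xA k) ^ 2 + 2 * (xA k * yA k) + ((yA k) ^ 2 + xA k) := by ring
  rw [h, xA_sq, charAk, yA_sq]; ring

noncomputable def σhom : Ak k →ₐ[k] Ak k := by
  refine Ideal.Quotient.liftₐ _ (MvPolynomial.aeval ![xA k, xA k + yA k]) ?_
  intro a ha
  refine Submodule.span_induction ?_ ?_ ?_ ?_ ha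
  · rintro p (rfl | rfl)
    · simp only [map_pow, MvPolynomial.aeval_X]
      show (xA k) ^ 2 = 0
      exact xA_sq k
    · simp only [map_add, map_pow, MvPolynomial.aeval_X]
      show (xA k + yA k) ^ 2 + xA k = 0
      exact key k
  · simp
  · intro p q _ _ hp hq; simp [map_add, hp, hq]
  · intro c p _ hp; simp [hp]

lemma σhom_x : σhom k (xA k) = xA k := by
  simp only [σhom, Ideal.Quotient.liftₐ_apply]
  refine (Ideal.Quotient.lift_mk (a := MvPolynomial.X 0) _ _ _).trans ?_
  simp

lemma σhom_y : σhom k (yA k) = xA k + yA k := by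
  simp only [σhom, Ideal.Quotient.liftₐ_apply]
  refine (Ideal.Quotient.lift_mk (a := MvPolynomial.X 1) _ _ _).trans ?_
  simp

lemma ext_Ak {B : Type*} [CommRing B] [Algebra k B] {f g : Ak k →ₐ[k] B}
    (hx : f (xA k) = g (xA k)) (hy : f (yA k) = g (yA k)) : f = g := by
  refine Ideal.Quotient.algHom_ext k ?_
  refine MvPolynomial.algHom_ext fun i => ?_
  fin_cases i
  · exact hx
  · exact hy

lemma σhom_invol : (σhom k).comp (σhom k) = AlgHom.id k (Ak k) := by
  refine ext_Ak k ?_ ?_ <;>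
    simp [AlgHom.comp_apply, σhom_x, σhom_y, map_add]
  have h : xA k + (xA k + yA k) = 2 * xA k + yA k := by ring
  rw [h, charAk]; ring

end aux

section nz

variable (k : Type) [Field k] [CharP k 2]

set_option linter.unusedSectionVars false

noncomputable def tQ : Polynomial k ⧸ Ideal.span {(Polynomial.X : Polynomial k) ^ 4} :=
  Ideal.Quotient.mk _ Polynomial.X

lemma char2Q : (2 : Polynomial k ⧸ Ideal.span {(Polynomial.X : Polynomial k) ^ 4}) = 0 := by
  have h2 : (2 : k) = 0 := by
    have := CharP.cast_eq_zero k 2; exact_mod_cast this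
  calc (2 : Polynomial k ⧸ Ideal.span {(Polynomial.X : Polynomial k) ^ 4})
      = algebraMap k _ 2 := (map_ofNat _ 2).symm
    _ = 0 := by rw [h2, map_zero]

noncomputable def ψhom : Ak k →ₐ[k] Polynomial k ⧸ Ideal.span {(Polynomial.X : Polynomial k) ^ 4} := by
  refine Ideal.Quotient.liftₐ _ (MvPolynomial.aeval ![tQ k ^ 2, tQ k]) ?_
  intro a ha
  refine Submodule.span_induction ?_ ?_ ?_ ?_ ha
  · rintro p (rfl | rfl)
    · simp only [map_pow, MvPolynomial.aeval_X]
      show (tQ k ^ 2) ^ 2 = 0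
      rw [← pow_mul, tQ, ← map_pow, Ideal.Quotient.eq_zero_iff_mem]
      exact Ideal.subset_span (by simp)
    · simp only [map_add, map_pow, MvPolynomial.aeval_X]
      show (tQ k) ^ 2 + tQ k ^ 2 = 0
      have : (tQ k) ^ 2 + tQ k ^ 2 = 2 * tQ k ^ 2 := by ring
      rw [this, char2Q]; ring
  · simp
  · intro p q _ _ hp hq; simp [map_add, hp, hq]
  · intro c p _ hp; simp [hp]

lemma tQ_sq_ne : tQ k ^ 2 ≠ 0 := by
  rw [tQ, ← map_pow, Ne, Ideal.Quotient.eq_zero_iff_mem, Ideal.mem_span_singleton]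
  intro hdvd
  have := (Polynomial.X_pow_dvd_iff.mp hdvd) 2 (by norm_num)
  simp at this

lemma xA_ne : xA k ≠ 0 := by
  intro h
  have : ψhom k (xA k) = tQ k ^ 2 := by
    simp only [ψhom, Ideal.Quotient.liftₐ_apply]
    refine (Ideal.Quotient.lift_mk (a := MvPolynomial.X 0) _ _ _).trans ?_
    simp
  rw [h, map_zero] at this
  exact tQ_sq_ne k this.symm

end nz

/-- the pointed α₂-torsor Spec A → Spec(k[x]/x²) admits a nonidentity
automorphism: there is a k-algebra automorphism σ of A fixing the R-algebra structure
(σ(x) = x), compatible with the coaction ρ and fixing the augmentation ε, with σ ≠ id. -/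
theorem stmt15 (k : Type) [Field k] [CharP k 2]
    (ρ : Ak k →ₐ[k] Hk k ⊗[k] Ak k)
    (hρx : ρ (xA k) = (1 : Hk k) ⊗ₜ[k] xA k)
    (hρy : ρ (yA k) = xH k ⊗ₜ[k] (1 : Ak k) + (1 : Hk k) ⊗ₜ[k] yA k)
    (ε : Ak k →ₐ[k] k) (hεx : ε (xA k) = 0) (hεy : ε (yA k) = 0) :
    ∃ σ : Ak k ≃ₐ[k] Ak k,
      σ (xA k) = xA k ∧
      (∀ a : Ak k,
        (Algebra.TensorProduct.map (AlgHom.id k (Hk k)) (σ : Ak k →ₐ[k] Ak k)) (ρ a)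
          = ρ (σ a)) ∧
      (∀ a : Ak k, ε (σ a) = ε a) ∧
      σ ≠ AlgEquiv.refl := by
  refine ⟨AlgEquiv.ofAlgHom (σhom k) (σhom k) (σhom_invol k) (σhom_invol k), σhom_x k, ?_, ?_, ?_⟩
  · have heq : ((Algebra.TensorProduct.map (R := k) (S := k) (AlgHom.id k (Hk k)) (σhom k)).comp ρ
        : Ak k →ₐ[k] Hk k ⊗[k] Ak k) = ρ.comp (σhom k) := by
      refine ext_Ak (B := Hk k ⊗[k] Ak k) k ?_ ?_
      · simp [AlgHom.comp_apply, σhom_x, hρx]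
      · simp [AlgHom.comp_apply, σhom_y, hρy, hρx, map_add, tmul_add]
        abel
    intro a
    exact AlgHom.congr_fun heq a
  · have heq : ε.comp (σhom k) = ε := by
      refine ext_Ak (B := k) k ?_ ?_
      · simp [AlgHom.comp_apply, σhom_x]
      · simp [AlgHom.comp_apply, σhom_y, map_add, hεx, hεy]
    intro a
    exact AlgHom.congr_fun heq a
  · intro h
    have hy : σhom k (yA k) = yA k := by
      have := AlgEquiv.congr_fun h (yA k)
      simpa using this
    rw [σhom_y] at hy
    have : xA k = 0 := by
      have := add_right_cancel (b := yA k) (a := xA k) (c := 0) (by simpa using hy)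
      exact this
    exact xA_ne k this
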